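/- Suppose 1 ∈ U and U contains elements u, v, w such that 1, u, v, w are pairwise non-±-equal. Then R(U) is a subring of ℂ if and only if for every pair of elementary monomials z and z', the product z·z' is a ℤ[P]-linear combination of elementary monomials (a finite sum Σᵢ cᵢ·zᵢ with cᵢ ∈ ℤ[P] and zᵢ elementary monomials). -/

import Mathlib

open Complex

/-- The bracket `[x,y] = x * conj y - y * conj x`. -/
noncomputable def brkt (x y : ℂ) : ℂ := x * (starRingEnd ℂ) y - y * (starRingEnd ℂ) x

/-- `lineInt α β p q` is the intersection point `I_{α,β}(p,q)` of the line through `p`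
with direction `α` and the line through `q` with direction `β` (for unit `α ≠ ±β`),
given by the formula of Buhler et al. -/
noncomputable def lineInt (α β p q : ℂ) : ℂ :=
  brkt α p / brkt α β * β + brkt β q / brkt β α * α

/-- The sets `S n` in the inductive construction. -/
def stepSet (U : Set ℂ) : ℕ → Set ℂ
  | 0 => {0, 1}
  | n + 1 => {z | ∃ α ∈ U, ∃ β ∈ U, α ≠ β ∧ α ≠ -β ∧
      ∃ p ∈ stepSet U n, ∃ q ∈ stepSet U n, z = lineInt α β p q}

/-- `RU U = ⋃ n, S n`. -/
def RU (U : Set ℂ) : Set ℂ := ⋃ n, stepSet U n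

/-- Elementary monomials of `U`. -/
def IsElem (U : Set ℂ) (z : ℂ) : Prop :=
  ∃ α ∈ U, ∃ β ∈ U, α ≠ β ∧ α ≠ -β ∧ z = lineInt α β 0 1

/-- Monomials of `U`, defined inductively. -/
inductive IsMonomial (U : Set ℂ) : ℂ → Prop
  | elementary (α β : ℂ) (hα : α ∈ U) (hβ : β ∈ U) (h1 : α ≠ β) (h2 : α ≠ -β) :
      IsMonomial U (lineInt α β 0 1)
  | step (α β m : ℂ) (hα : α ∈ U) (hβ : β ∈ U) (h1 : α ≠ β) (h2 : α ≠ -β)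
      (hm : IsMonomial U m) : IsMonomial U (lineInt α β 0 m)

/-- `P`: the real numbers arising as length-two monomials `I_{γ,δ}(0,z)` on the real axis. -/
def projSet (U : Set ℂ) : Set ℝ :=
  {r | ∃ γ ∈ U, ∃ δ ∈ U, γ ≠ δ ∧ γ ≠ -δ ∧ ∃ z, IsElem U z ∧ (r : ℂ) = lineInt γ δ 0 z}

/-- `m` is a `ℤ[P]`-linear combination of elementary monomials of `U`. -/
def IsZPComb (U : Set ℂ) (m : ℂ) : Prop :=
  ∃ (n : ℕ) (c : Fin n → ℝ) (z : Fin n → ℂ),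
    (∀ i, c i ∈ Subring.closure (projSet U)) ∧ (∀ i, IsElem U (z i)) ∧
    m = ∑ i, (c i : ℂ) * z i

-- ===================== auxiliary lemmas =====================

lemma brkt_conj (x y : ℂ) : (starRingEnd ℂ) (brkt x y) = - brkt x y := by
  simp [brkt]; ring

lemma brkt_antisymm (x y : ℂ) : brkt x y = - brkt y x := by simp [brkt]

lemma brkt_zero_right (x : ℂ) : brkt x 0 = 0 := by simp [brkt]

lemma ratio_conj (a b c d : ℂ) :
    (starRingEnd ℂ) (brkt a b / brkt c d) = brkt a b / brkt c d := by
  rw [map_div₀, brkt_conj, brkt_conj, neg_div_neg_eq]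

lemma brkt_add_right (x a b : ℂ) : brkt x (a + b) = brkt x a + brkt x b := by
  simp [brkt]; ring

lemma brkt_smul (x c y : ℂ) (hc : (starRingEnd ℂ) c = c) : brkt x (c * y) = c * brkt x y := by
  simp only [brkt, map_mul, hc]; ring

lemma brkt_real (x a : ℂ) (ha : (starRingEnd ℂ) a = a) : brkt x a = a * brkt x 1 := by
  simpa using brkt_smul x a 1 ha

lemma g_form (μ ν q : ℂ) : lineInt μ ν 0 q = brkt ν q / brkt ν μ * μ := by
  simp [lineInt, brkt_zero_right]

lemma g_smul (μ ν c q : ℂ) (hc : (starRingEnd ℂ) c = c) :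
    lineInt μ ν 0 (c * q) = c * lineInt μ ν 0 q := by
  rw [g_form, g_form, brkt_smul _ _ _ hc, mul_div_assoc, mul_assoc]

lemma lineInt_self (α β p : ℂ) (h : brkt α β ≠ 0) : lineInt α β p p = p := by
  have h2 : brkt β α ≠ 0 := by rw [brkt_antisymm]; simpa using h
  have e : lineInt α β p p = (brkt α p * β - brkt β p * α) / brkt α β := by
    rw [lineInt, brkt_antisymm β α]; ring
  rw [e, div_eq_iff h]
  simp only [brkt]
  ring

lemma unit_ne_zero {z : ℂ} (h : ‖z‖ = 1) : z ≠ 0 := by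
  intro h0; rw [h0] at h; simp at h

lemma unit_conj {z : ℂ} (h : ‖z‖ = 1) : (starRingEnd ℂ) z = z⁻¹ := by
  have h1 : (starRingEnd ℂ) z * z = 1 := by
    rw [mul_comm, Complex.mul_conj]; norm_cast; rw [Complex.normSq_eq_norm_sq, h]; norm_num
  exact eq_inv_of_mul_eq_one_left h1

lemma brkt_ne {α β : ℂ} (hα : ‖α‖ = 1) (hβ : ‖β‖ = 1)
    (h1 : α ≠ β) (h2 : α ≠ -β) : brkt α β ≠ 0 := by
  have hα0 := unit_ne_zero hα
  have hβ0 := unit_ne_zero hβ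
  intro h
  rw [brkt, unit_conj hα, unit_conj hβ] at h
  have h3 : α ^ 2 - β ^ 2 = 0 := by
    have h4 : (α * β⁻¹ - β * α⁻¹) * (α * β) = α ^ 2 - β ^ 2 := by field_simp
    rw [h, zero_mul] at h4; exact h4.symm
  rcases mul_eq_zero.mp (show (α - β) * (α + β) = 0 by linear_combination h3) with h4 | h4
  · exact h1 (sub_eq_zero.mp h4)
  · exact h2 (eq_neg_of_add_eq_zero_left h4)

lemma brkt_one_ne {δ : ℂ} (habs : ‖δ‖ = 1) (h2 : δ ^ 2 ≠ 1) : brkt δ 1 ≠ 0 := by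
  have h0 := unit_ne_zero habs
  intro h
  apply h2
  rw [brkt, unit_conj habs] at h
  simp only [map_one, mul_one, one_mul] at h
  have h' : δ = δ⁻¹ := by linear_combination h
  rw [sq]
  nth_rewrite 1 [h']
  exact inv_mul_cancel₀ h0

lemma decomp (u p : ℂ) (h : brkt u 1 ≠ 0) :
    p = brkt u p / brkt u 1 + brkt 1 p / brkt 1 u * u := by
  have h3 : u - (starRingEnd ℂ) u ≠ 0 := by simpa [brkt] using h
  have h4 : (starRingEnd ℂ) u - u ≠ 0 := fun hh => h3 (by linear_combination -hh)
  simp only [brkt, map_one]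
  field_simp
  ring

lemma recomb (u a b : ℂ) (ha : (starRingEnd ℂ) a = a) (hb : (starRingEnd ℂ) b = b)
    (h : brkt u 1 ≠ 0) : lineInt u 1 a (b * u) = a + b * u := by
  have h3 : u - (starRingEnd ℂ) u ≠ 0 := by simpa [brkt] using h
  have h4 : (starRingEnd ℂ) u - u ≠ 0 := fun hh => h3 (by linear_combination -hh)
  simp only [lineInt, brkt, map_one, map_mul, ha, hb]
  field_simp

lemma split_lineInt (α β p q : ℂ) :
    lineInt α β p q = lineInt β α 0 p + lineInt α β 0 q := by
  simp only [lineInt, brkt_zero_right, zero_div, zero_mul, zero_add]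

lemma len2_gen (γ δ z : ℂ) (hδ1 : brkt δ 1 ≠ 0) (hδγ : brkt δ γ ≠ 0) :
    lineInt γ δ 0 z = lineInt 1 δ 0 z * lineInt γ δ 0 1 := by
  rw [g_form, g_form, g_form, mul_one]
  have e : brkt δ z / brkt δ 1 * (brkt δ 1 / brkt δ γ * γ)
      = brkt δ z / brkt δ γ * γ * (brkt δ 1 / brkt δ 1) := by ring
  rw [e, div_self hδ1, mul_one]

lemma len2_deg (γ δ z : ℂ) (hδc : (starRingEnd ℂ) δ = δ)
    (hγ1 : brkt γ 1 ≠ 0) (hδγ : brkt δ γ ≠ 0) :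
    lineInt γ δ 0 z = z - lineInt 1 γ 0 z := by
  rw [g_form, g_form, mul_one]
  have h3 : γ - (starRingEnd ℂ) γ ≠ 0 := by simpa [brkt] using hγ1
  have h5 : δ * (starRingEnd ℂ) γ - γ * δ ≠ 0 := by simpa [brkt, hδc] using hδγ
  simp only [brkt, hδc, map_one, mul_one, one_mul]
  rw [div_mul_eq_mul_div, eq_sub_iff_add_eq, div_add_div _ _ h5 h3, div_eq_iff (mul_ne_zero h5 h3)]
  ring

-- ===================== RU membership infrastructure =====================

lemma zero_mem_RU (U : Set ℂ) : (0 : ℂ) ∈ RU U :=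
  Set.mem_iUnion.2 ⟨0, Or.inl rfl⟩

lemma one_mem_RU (U : Set ℂ) : (1 : ℂ) ∈ RU U :=
  Set.mem_iUnion.2 ⟨0, Or.inr rfl⟩

section ctx

variable {U : Set ℂ} (hU : ∀ z ∈ U, ‖z‖ = 1) (h1U : (1 : ℂ) ∈ U)
  {u v : ℂ} (hu : u ∈ U) (hv : v ∈ U)
  (hu1 : u ≠ 1) (hu1' : u ≠ -1) (hv1 : v ≠ 1) (hv1' : v ≠ -1)
  (huv : u ≠ v) (huv' : u ≠ -v)

include hU h1U hu hu1 hu1' in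
lemma stepSet_mono_succ (n : ℕ) : stepSet U n ⊆ stepSet U (n + 1) := by
  intro x hx
  have hB : brkt 1 u ≠ 0 :=
    brkt_ne (by simp) (hU u hu) (Ne.symm hu1) (fun h => hu1' (by linear_combination h))
  exact ⟨1, h1U, u, hu, Ne.symm hu1, fun h => hu1' (by linear_combination h),
    x, hx, x, hx, (lineInt_self 1 u x hB).symm⟩

include hU h1U hu hu1 hu1' in
lemma stepSet_mono_le {n m : ℕ} (h : n ≤ m) : stepSet U n ⊆ stepSet U m := by
  induction h with
  | refl => exact subset_rfl
  | step _ ih => exact fun x hx =>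
      stepSet_mono_succ hU h1U hu hu1 hu1' _ (ih hx)

include hU h1U hu hu1 hu1' in
lemma Imem {α β p q : ℂ} (hα : α ∈ U) (hβ : β ∈ U) (h1 : α ≠ β) (h2 : α ≠ -β)
    (hp : p ∈ RU U) (hq : q ∈ RU U) : lineInt α β p q ∈ RU U := by
  obtain ⟨m, hm⟩ := Set.mem_iUnion.1 hp
  obtain ⟨k, hk⟩ := Set.mem_iUnion.1 hq
  refine Set.mem_iUnion.2 ⟨max m k + 1, ?_⟩
  exact ⟨α, hα, β, hβ, h1, h2,
    p, stepSet_mono_le hU h1U hu hu1 hu1' (le_max_left m k) hm,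
    q, stepSet_mono_le hU h1U hu hu1 hu1' (le_max_right m k) hk, rfl⟩

end ctx

section ctx2

variable {U : Set ℂ} (hU : ∀ z ∈ U, ‖z‖ = 1) (h1U : (1 : ℂ) ∈ U)
  {u v : ℂ} (hu : u ∈ U) (hv : v ∈ U)
  (hu1 : u ≠ 1) (hu1' : u ≠ -1) (hv1 : v ≠ 1) (hv1' : v ≠ -1)
  (huv : u ≠ v) (huv' : u ≠ -v)

include hU h1U hu hv hu1 hu1' hv1 hv1' huv huv' in
lemma add_mem_RU {p q : ℂ} (hp : p ∈ RU U) (hq : q ∈ RU U) : p + q ∈ RU U := by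
  have habsu := hU u hu
  have habsv := hU v hv
  have habs1 : ‖(1 : ℂ)‖ = 1 := by simp
  have hBu1 : brkt u 1 ≠ 0 := brkt_ne habsu habs1 hu1 hu1'
  have hB1u : brkt 1 u ≠ 0 := by rw [brkt_antisymm]; simpa using hBu1
  have hBv1 : brkt v 1 ≠ 0 := brkt_ne habsv habs1 hv1 hv1'
  have hB1v : brkt 1 v ≠ 0 := by rw [brkt_antisymm]; simpa using hBv1
  have hBvu : brkt v u ≠ 0 :=
    brkt_ne habsv habsu (Ne.symm huv) (fun h => huv' (by linear_combination h))
  have h1u : (1 : ℂ) ≠ u := Ne.symm hu1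
  have h1u' : (1 : ℂ) ≠ -u := fun h => hu1' (by linear_combination h)
  have h1v : (1 : ℂ) ≠ v := Ne.symm hv1
  have h1v' : (1 : ℂ) ≠ -v := fun h => hv1' (by linear_combination h)
  -- components
  have hap_mem : brkt u p / brkt u 1 ∈ RU U := by
    have h := Imem hU h1U hu hu1 hu1' h1U hu h1u h1u' (zero_mem_RU U) hp
    rwa [g_form, mul_one] at h
  have haq_mem : brkt u q / brkt u 1 ∈ RU U := by
    have h := Imem hU h1U hu hu1 hu1' h1U hu h1u h1u' (zero_mem_RU U) hq
    rwa [g_form, mul_one] at h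
  have hbpu_mem : brkt 1 p / brkt 1 u * u ∈ RU U := by
    have h := Imem hU h1U hu hu1 hu1' hu h1U hu1 hu1' (zero_mem_RU U) hp
    rwa [g_form] at h
  have hbqu_mem : brkt 1 q / brkt 1 u * u ∈ RU U := by
    have h := Imem hU h1U hu hu1 hu1' hu h1U hu1 hu1' (zero_mem_RU U) hq
    rwa [g_form] at h
  -- A-chain : (ap + aq) ∈ RU
  have hXval : lineInt u v 0 (brkt u q / brkt u 1)
      = brkt u q / brkt u 1 * (brkt v 1 / brkt v u) * u := by
    rw [g_form, brkt_real v _ (ratio_conj _ _ _ _)]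
    ring
  have hXmem : lineInt u v 0 (brkt u q / brkt u 1) ∈ RU U :=
    Imem hU h1U hu hu1 hu1' hu hv huv huv' (zero_mem_RU U) haq_mem
  have hYval : lineInt u 1 (brkt u p / brkt u 1) (lineInt u v 0 (brkt u q / brkt u 1))
      = brkt u p / brkt u 1 + brkt u q / brkt u 1 * (brkt v 1 / brkt v u) * u := by
    rw [hXval]
    exact recomb u _ _ (ratio_conj _ _ _ _)
      (by rw [map_mul, ratio_conj, ratio_conj]) hBu1
  have hYmem : lineInt u 1 (brkt u p / brkt u 1) (lineInt u v 0 (brkt u q / brkt u 1)) ∈ RU U :=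
    Imem hU h1U hu hu1 hu1' hu h1U hu1 hu1' hap_mem hXmem
  have hZval : lineInt 1 v 0
        (brkt u p / brkt u 1 + brkt u q / brkt u 1 * (brkt v 1 / brkt v u) * u)
      = brkt u p / brkt u 1 + brkt u q / brkt u 1 := by
    rw [g_form, brkt_add_right, brkt_real v _ (ratio_conj _ _ _ _),
      brkt_smul v _ u (by rw [map_mul, ratio_conj, ratio_conj]), mul_one]
    field_simp
  have hAmem : brkt u p / brkt u 1 + brkt u q / brkt u 1 ∈ RU U := by
    have h := Imem hU h1U hu hu1 hu1' h1U hv h1v h1v' (zero_mem_RU U) hYmem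
    rwa [hYval, hZval] at h
  -- B-chain : (bp + bq) * u ∈ RU
  have hX'val : lineInt 1 v 0 (brkt 1 q / brkt 1 u * u)
      = brkt 1 q / brkt 1 u * (brkt v u / brkt v 1) := by
    rw [g_form, brkt_smul v _ u (ratio_conj _ _ _ _), mul_one]
    ring
  have hX'mem : lineInt 1 v 0 (brkt 1 q / brkt 1 u * u) ∈ RU U :=
    Imem hU h1U hu hu1 hu1' h1U hv h1v h1v' (zero_mem_RU U) hbqu_mem
  have hY'val : lineInt u 1 (lineInt 1 v 0 (brkt 1 q / brkt 1 u * u)) (brkt 1 p / brkt 1 u * u)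
      = brkt 1 q / brkt 1 u * (brkt v u / brkt v 1) + brkt 1 p / brkt 1 u * u := by
    rw [hX'val]
    exact recomb u _ _ (by rw [map_mul, ratio_conj, ratio_conj]) (ratio_conj _ _ _ _) hBu1
  have hY'mem : lineInt u 1 (lineInt 1 v 0 (brkt 1 q / brkt 1 u * u))
      (brkt 1 p / brkt 1 u * u) ∈ RU U :=
    Imem hU h1U hu hu1 hu1' hu h1U hu1 hu1' hX'mem hbpu_mem
  have hZ'val : lineInt u v 0
        (brkt 1 q / brkt 1 u * (brkt v u / brkt v 1) + brkt 1 p / brkt 1 u * u)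
      = (brkt 1 p / brkt 1 u + brkt 1 q / brkt 1 u) * u := by
    rw [g_form, brkt_add_right, brkt_real v _ (by rw [map_mul, ratio_conj, ratio_conj]),
      brkt_smul v _ u (ratio_conj _ _ _ _)]
    field_simp
    ring
  have hBmem : (brkt 1 p / brkt 1 u + brkt 1 q / brkt 1 u) * u ∈ RU U := by
    have h := Imem hU h1U hu hu1 hu1' hu hv huv huv' (zero_mem_RU U) hY'mem
    rwa [hY'val, hZ'val] at h
  -- recombine
  have hWval : lineInt u 1 (brkt u p / brkt u 1 + brkt u q / brkt u 1)
        ((brkt 1 p / brkt 1 u + brkt 1 q / brkt 1 u) * u)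
      = brkt u p / brkt u 1 + brkt u q / brkt u 1
        + (brkt 1 p / brkt 1 u + brkt 1 q / brkt 1 u) * u :=
    recomb u _ _ (by rw [map_add, ratio_conj, ratio_conj])
      (by rw [map_add, ratio_conj, ratio_conj]) hBu1
  have h := Imem hU h1U hu hu1 hu1' hu h1U hu1 hu1' hAmem hBmem
  rw [hWval] at h
  have e : brkt u p / brkt u 1 + brkt u q / brkt u 1
      + (brkt 1 p / brkt 1 u + brkt 1 q / brkt 1 u) * u = p + q := by
    linear_combination -(decomp u p hBu1) - (decomp u q hBu1)
  rwa [e] at h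

end ctx2

section ctx3

variable {U : Set ℂ} (hU : ∀ z ∈ U, ‖z‖ = 1) (h1U : (1 : ℂ) ∈ U)
  {u v : ℂ} (hu : u ∈ U) (hv : v ∈ U)
  (hu1 : u ≠ 1) (hu1' : u ≠ -1) (hv1 : v ≠ 1) (hv1' : v ≠ -1)
  (huv : u ≠ v) (huv' : u ≠ -v)

include hU h1U hu hv hu1 hu1' hv1 hv1' huv huv' in
lemma neg_mem_RU {p : ℂ} (hp : p ∈ RU U) : -p ∈ RU U := by
  have habsu := hU u hu
  have habsv := hU v hv
  have habs1 : ‖(1 : ℂ)‖ = 1 := by simp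
  have hBu1 : brkt u 1 ≠ 0 := brkt_ne habsu habs1 hu1 hu1'
  have hB1u : brkt 1 u ≠ 0 := by rw [brkt_antisymm]; simpa using hBu1
  have hBv1 : brkt v 1 ≠ 0 := brkt_ne habsv habs1 hv1 hv1'
  have hB1v : brkt 1 v ≠ 0 := by rw [brkt_antisymm]; simpa using hBv1
  have hBvu : brkt v u ≠ 0 :=
    brkt_ne habsv habsu (Ne.symm huv) (fun h => huv' (by linear_combination h))
  have hBuv : brkt u v ≠ 0 := by rw [brkt_antisymm]; simpa using hBvu
  have h1u : (1 : ℂ) ≠ u := Ne.symm hu1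
  have h1u' : (1 : ℂ) ≠ -u := fun h => hu1' (by linear_combination h)
  have h1v : (1 : ℂ) ≠ v := Ne.symm hv1
  have h1v' : (1 : ℂ) ≠ -v := fun h => hv1' (by linear_combination h)
  have hv1ne : v ≠ 1 := hv1
  have hvu : v ≠ u := Ne.symm huv
  have hvu' : v ≠ -u := fun h => huv' (by linear_combination h)
  -- components
  have hap_mem : brkt u p / brkt u 1 ∈ RU U := by
    have h := Imem hU h1U hu hu1 hu1' h1U hu h1u h1u' (zero_mem_RU U) hp
    rwa [g_form, mul_one] at h
  have hbpu_mem : brkt 1 p / brkt 1 u * u ∈ RU U := by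
    have h := Imem hU h1U hu hu1 hu1' hu h1U hu1 hu1' (zero_mem_RU U) hp
    rwa [g_form] at h
  -- negate the 1-component : chain 1 -> u -> v -> 1
  have hN1 : lineInt u v 0 (brkt u p / brkt u 1)
      = brkt u p / brkt u 1 * (brkt v 1 / brkt v u) * u := by
    rw [g_form, brkt_real v _ (ratio_conj _ _ _ _)]
    ring
  have hN2 : lineInt v 1 0 (brkt u p / brkt u 1 * (brkt v 1 / brkt v u) * u)
      = brkt u p / brkt u 1 * (brkt v 1 / brkt v u) * (brkt 1 u / brkt 1 v) * v := by
    rw [g_form, show brkt u p / brkt u 1 * (brkt v 1 / brkt v u) * u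
      = brkt u p / brkt u 1 * (brkt v 1 / brkt v u) * u from rfl]
    rw [brkt_smul 1 _ u (by rw [map_mul, ratio_conj, ratio_conj])]
    ring
  have hN3 : lineInt 1 u 0
        (brkt u p / brkt u 1 * (brkt v 1 / brkt v u) * (brkt 1 u / brkt 1 v) * v)
      = -(brkt u p / brkt u 1) := by
    rw [g_form, brkt_smul u _ v
      (by rw [map_mul, map_mul, ratio_conj, ratio_conj, ratio_conj]), mul_one]
    rw [show brkt v u = -brkt u v from brkt_antisymm v u,
      show brkt 1 v = -brkt v 1 from brkt_antisymm 1 v,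
      show brkt u 1 = -brkt 1 u from brkt_antisymm u 1]
    field_simp
  have hNA : -(brkt u p / brkt u 1) ∈ RU U := by
    have h := Imem hU h1U hu hu1 hu1' h1U hu h1u h1u' (zero_mem_RU U)
      (Imem hU h1U hu hu1 hu1' hv h1U hv1ne hv1' (zero_mem_RU U)
        (Imem hU h1U hu hu1 hu1' hu hv huv huv' (zero_mem_RU U) hap_mem))
    rw [hN1, hN2, hN3] at h
    exact h
  -- negate the u-component : chain u -> v -> 1 -> u
  have hM1 : lineInt v 1 0 (brkt 1 p / brkt 1 u * u)
      = brkt 1 p / brkt 1 u * (brkt 1 u / brkt 1 v) * v := by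
    rw [g_form, brkt_smul 1 _ u (ratio_conj _ _ _ _)]
    ring
  have hM2 : lineInt 1 u 0 (brkt 1 p / brkt 1 u * (brkt 1 u / brkt 1 v) * v)
      = brkt 1 p / brkt 1 u * (brkt 1 u / brkt 1 v) * (brkt u v / brkt u 1) := by
    rw [g_form, brkt_smul u _ v (by rw [map_mul, ratio_conj, ratio_conj]), mul_one]
    ring
  have hM3 : lineInt u v 0
        (brkt 1 p / brkt 1 u * (brkt 1 u / brkt 1 v) * (brkt u v / brkt u 1))
      = -(brkt 1 p / brkt 1 u) * u := by
    rw [g_form, brkt_real v _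
      (by rw [map_mul, map_mul, ratio_conj, ratio_conj, ratio_conj])]
    rw [show brkt v u = -brkt u v from brkt_antisymm v u,
      show brkt 1 v = -brkt v 1 from brkt_antisymm 1 v,
      show brkt u 1 = -brkt 1 u from brkt_antisymm u 1]
    field_simp
  have hNB : -(brkt 1 p / brkt 1 u) * u ∈ RU U := by
    have h := Imem hU h1U hu hu1 hu1' hu hv huv huv' (zero_mem_RU U)
      (Imem hU h1U hu hu1 hu1' h1U hu h1u h1u' (zero_mem_RU U)
        (Imem hU h1U hu hu1 hu1' hv h1U hv1ne hv1' (zero_mem_RU U) hbpu_mem))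
    rw [hM1, hM2, hM3] at h
    exact h
  -- recombine
  have hW : lineInt u 1 (-(brkt u p / brkt u 1)) (-(brkt 1 p / brkt 1 u) * u)
      = -(brkt u p / brkt u 1) + -(brkt 1 p / brkt 1 u) * u :=
    recomb u _ _ (by rw [map_neg, ratio_conj]) (by rw [map_neg, ratio_conj]) hBu1
  have h := Imem hU h1U hu hu1 hu1' hu h1U hu1 hu1' hNA hNB
  rw [hW] at h
  have e : -(brkt u p / brkt u 1) + -(brkt 1 p / brkt 1 u) * u = -p := by
    linear_combination decomp u p hBu1
  rwa [e] at h

end ctx3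

section ctx4

variable {U : Set ℂ} (hU : ∀ z ∈ U, ‖z‖ = 1) (h1U : (1 : ℂ) ∈ U)
  {u v : ℂ} (hu : u ∈ U) (hv : v ∈ U)
  (hu1 : u ≠ 1) (hu1' : u ≠ -1) (hv1 : v ≠ 1) (hv1' : v ≠ -1)
  (huv : u ≠ v) (huv' : u ≠ -v)

include hU h1U hu hv hu1 hu1' hv1 hv1' huv huv' in
lemma smul_mem_RU {r : ℝ} (hr : r ∈ projSet U) {x : ℂ} (hx : x ∈ RU U) :
    (r : ℂ) * x ∈ RU U := by
  obtain ⟨γ, hγ, δ, hδ, hγδ, hγδ', z, hz, hrval⟩ := hr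
  obtain ⟨α, hα, β, hβ, hαβ, hαβ', hzval⟩ := hz
  have habsu := hU u hu
  have habsv := hU v hv
  have habs1 : ‖(1 : ℂ)‖ = 1 := by simp
  have hBu1 : brkt u 1 ≠ 0 := brkt_ne habsu habs1 hu1 hu1'
  have hB1u : brkt 1 u ≠ 0 := by rw [brkt_antisymm]; simpa using hBu1
  have hBv1 : brkt v 1 ≠ 0 := brkt_ne habsv habs1 hv1 hv1'
  have hBvu : brkt v u ≠ 0 :=
    brkt_ne habsv habsu (Ne.symm huv) (fun h => huv' (by linear_combination h))
  have h1u : (1 : ℂ) ≠ u := Ne.symm hu1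
  have h1u' : (1 : ℂ) ≠ -u := fun h => hu1' (by linear_combination h)
  have h1v : (1 : ℂ) ≠ v := Ne.symm hv1
  have h1v' : (1 : ℂ) ≠ -v := fun h => hv1' (by linear_combination h)
  -- scaling a conj-fixed point by r
  have scale1 : ∀ c : ℂ, (starRingEnd ℂ) c = c → c ∈ RU U → c * (r : ℂ) ∈ RU U := by
    intro c hc hcm
    have h2 := Imem hU h1U hu hu1 hu1' hγ hδ hγδ hγδ' (zero_mem_RU U)
      (Imem hU h1U hu hu1 hu1' hα hβ hαβ hαβ' (zero_mem_RU U) hcm)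
    have e1 : lineInt α β 0 c = c * lineInt α β 0 1 := by
      have h3 := g_smul α β c 1 hc
      rwa [mul_one] at h3
    rw [e1, g_smul γ δ c _ hc, ← hzval, ← hrval] at h2
    exact h2
  -- components of x
  have hax_mem : brkt u x / brkt u 1 ∈ RU U := by
    have h := Imem hU h1U hu hu1 hu1' h1U hu h1u h1u' (zero_mem_RU U) hx
    rwa [g_form, mul_one] at h
  have hbxu_mem : brkt 1 x / brkt 1 u * u ∈ RU U := by
    have h := Imem hU h1U hu hu1 hu1' hu h1U hu1 hu1' (zero_mem_RU U) hx
    rwa [g_form] at h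
  -- scaled 1-component
  have t1 : (r : ℂ) * (brkt u x / brkt u 1) ∈ RU U := by
    have h := scale1 _ (ratio_conj _ _ _ _) hax_mem
    rwa [mul_comm] at h
  -- scaled u-component
  have hTval : lineInt 1 v 0 (brkt 1 x / brkt 1 u * u)
      = brkt 1 x / brkt 1 u * (brkt v u / brkt v 1) := by
    rw [g_form, brkt_smul v _ u (ratio_conj _ _ _ _), mul_one]
    ring
  have hTmem : brkt 1 x / brkt 1 u * (brkt v u / brkt v 1) ∈ RU U := by
    have h := Imem hU h1U hu hu1 hu1' h1U hv h1v h1v' (zero_mem_RU U) hbxu_mem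
    rwa [hTval] at h
  have t2 : brkt 1 x / brkt 1 u * (brkt v u / brkt v 1) * (r : ℂ) ∈ RU U :=
    scale1 _ (by rw [map_mul, ratio_conj, ratio_conj]) hTmem
  have hbackval : lineInt u v 0 (brkt 1 x / brkt 1 u * (brkt v u / brkt v 1) * (r : ℂ))
      = (r : ℂ) * (brkt 1 x / brkt 1 u * u) := by
    rw [g_form, brkt_real v _
      (by rw [map_mul, map_mul, ratio_conj, ratio_conj, Complex.conj_ofReal])]
    field_simp
  have t3 : (r : ℂ) * (brkt 1 x / brkt 1 u * u) ∈ RU U := by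
    have h := Imem hU h1U hu hu1 hu1' hu hv huv huv' (zero_mem_RU U) t2
    rwa [hbackval] at h
  have hsum := add_mem_RU hU h1U hu hv hu1 hu1' hv1 hv1' huv huv' t1 t3
  have e : (r : ℂ) * (brkt u x / brkt u 1) + (r : ℂ) * (brkt 1 x / brkt 1 u * u)
      = (r : ℂ) * x := by
    linear_combination -(r : ℂ) * decomp u x hBu1
  rwa [e] at hsum

include hU h1U hu hv hu1 hu1' hv1 hv1' huv huv' in
lemma zpsmul_mem_RU {c : ℝ} (hc : c ∈ Subring.closure (projSet U)) :
    ∀ x ∈ RU U, (c : ℂ) * x ∈ RU U := by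
  induction hc using Subring.closure_induction with
  | mem r hr => exact fun x hx =>
      smul_mem_RU hU h1U hu hv hu1 hu1' hv1 hv1' huv huv' hr hx
  | zero => intro x hx; norm_num; exact zero_mem_RU U
  | one => intro x hx; norm_num; exact hx
  | add a b _ _ iha ihb =>
      intro x hx
      have e : ((a + b : ℝ) : ℂ) * x = (a : ℂ) * x + (b : ℂ) * x := by push_cast; ring
      rw [e]
      exact add_mem_RU hU h1U hu hv hu1 hu1' hv1 hv1' huv huv' (iha x hx) (ihb x hx)
  | neg a _ iha =>
      intro x hx
      have e : ((-a : ℝ) : ℂ) * x = -((a : ℂ) * x) := by push_cast; ring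
      rw [e]
      exact neg_mem_RU hU h1U hu hv hu1 hu1' hv1 hv1' huv huv' (iha x hx)
  | mul a b _ _ iha ihb =>
      intro x hx
      have e : ((a * b : ℝ) : ℂ) * x = (a : ℂ) * ((b : ℂ) * x) := by push_cast; ring
      rw [e]
      exact iha _ (ihb x hx)

end ctx4

-- ===================== ZP-combination machinery =====================

lemma brkt_sum (x : ℂ) {ι : Type*} (s : Finset ι) (f : ι → ℂ) :
    brkt x (∑ i ∈ s, f i) = ∑ i ∈ s, brkt x (f i) := by
  simp only [brkt, map_sum, Finset.mul_sum, Finset.sum_mul]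
  rw [← Finset.sum_sub_distrib]

lemma comb_zero (U : Set ℂ) : IsZPComb U 0 :=
  ⟨0, Fin.elim0, Fin.elim0, fun i => i.elim0, fun i => i.elim0, by simp⟩

lemma comb_add {U : Set ℂ} {a b : ℂ} (ha : IsZPComb U a) (hb : IsZPComb U b) :
    IsZPComb U (a + b) := by
  obtain ⟨n1, c1, z1, hc1, hz1, rfl⟩ := ha
  obtain ⟨n2, c2, z2, hc2, hz2, rfl⟩ := hb
  refine ⟨n1 + n2, Fin.append c1 c2, Fin.append z1 z2, ?_, ?_, ?_⟩
  · intro i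
    refine Fin.addCases (fun j => ?_) (fun j => ?_) i
    · rw [Fin.append_left]; exact hc1 j
    · rw [Fin.append_right]; exact hc2 j
  · intro i
    refine Fin.addCases (fun j => ?_) (fun j => ?_) i
    · rw [Fin.append_left]; exact hz1 j
    · rw [Fin.append_right]; exact hz2 j
  · rw [Fin.sum_univ_add]
    congr 1
    · exact Finset.sum_congr rfl fun j _ => by rw [Fin.append_left, Fin.append_left]
    · exact Finset.sum_congr rfl fun j _ => by rw [Fin.append_right, Fin.append_right]

lemma comb_smul {U : Set ℂ} {c : ℝ} (hc : c ∈ Subring.closure (projSet U)) {m : ℂ}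
    (hm : IsZPComb U m) : IsZPComb U ((c : ℂ) * m) := by
  obtain ⟨n, cs, zs, hcs, hzs, rfl⟩ := hm
  refine ⟨n, fun i => c * cs i, zs, fun i => mul_mem hc (hcs i), hzs, ?_⟩
  rw [Finset.mul_sum]
  exact Finset.sum_congr rfl fun i _ => by push_cast; ring

lemma comb_sum {U : Set ℂ} {ι : Type*} (s : Finset ι) (f : ι → ℂ)
    (h : ∀ i ∈ s, IsZPComb U (f i)) : IsZPComb U (∑ i ∈ s, f i) := by
  classical
  induction s using Finset.induction_on with
  | empty => simpa using comb_zero U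
  | insert _ _ hnot ih =>
      rw [Finset.sum_insert hnot]
      exact comb_add (h _ (Finset.mem_insert_self _ _))
        (ih fun i hi => h i (Finset.mem_insert_of_mem hi))

lemma comb_neg {U : Set ℂ} {m : ℂ} (hm : IsZPComb U m) : IsZPComb U (-m) := by
  have h := comb_smul (neg_mem (one_mem (Subring.closure (projSet U)))) hm
  have e : (((-1 : ℝ)) : ℂ) * m = -m := by push_cast; ring
  rwa [e] at h

lemma elem_mem_RU {U : Set ℂ} {z : ℂ} (hz : IsElem U z) : z ∈ RU U := by
  obtain ⟨α, hα, β, hβ, h1, h2, rfl⟩ := hz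
  exact Set.mem_iUnion.2 ⟨1, α, hα, β, hβ, h1, h2, 0, by simp [stepSet], 1, by simp [stepSet], rfl⟩

section ctx5

variable {U : Set ℂ} (hU : ∀ z ∈ U, ‖z‖ = 1) (h1U : (1 : ℂ) ∈ U)
  {u : ℂ} (hu : u ∈ U) (hu1 : u ≠ 1) (hu1' : u ≠ -1)

include hU h1U hu hu1 hu1' in
lemma one_elem : IsElem U 1 := by
  have hB : brkt u 1 ≠ 0 := brkt_ne (hU u hu) (by simp) hu1 hu1'
  exact ⟨1, h1U, u, hu, Ne.symm hu1, fun h => hu1' (by linear_combination h),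
    by rw [g_form, div_self hB, one_mul]⟩

include hU h1U hu hu1 hu1' in
lemma comb_one : IsZPComb U 1 :=
  ⟨1, fun _ => 1, fun _ => 1, fun _ => one_mem _,
    fun _ => one_elem hU h1U hu hu1 hu1', by simp⟩

include hU h1U hu hu1 hu1' in
lemma length2 {γ δ z : ℂ} (hγ : γ ∈ U) (hδ : δ ∈ U) (h1 : γ ≠ δ) (h2 : γ ≠ -δ)
    (hz : IsElem U z) : IsZPComb U (lineInt γ δ 0 z) := by
  have habsγ := hU γ hγ
  have habsδ := hU δ hδ
  have hδγ : brkt δ γ ≠ 0 :=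
    brkt_ne habsδ habsγ (Ne.symm h1) (fun h => h2 (by linear_combination h))
  by_cases hsq : δ ^ 2 = 1
  · -- degenerate case : δ = ±1
    have hδpm : δ = 1 ∨ δ = -1 := by
      rcases mul_eq_zero.mp (show (δ - 1) * (δ + 1) = 0 by linear_combination hsq) with h | h
      exacts [Or.inl (sub_eq_zero.mp h), Or.inr (eq_neg_of_add_eq_zero_left h)]
    have hγsq : γ ^ 2 ≠ 1 := by
      intro hh
      have hγpm : γ = 1 ∨ γ = -1 := by
        rcases mul_eq_zero.mp (show (γ - 1) * (γ + 1) = 0 by linear_combination hh) with h | h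
        exacts [Or.inl (sub_eq_zero.mp h), Or.inr (eq_neg_of_add_eq_zero_left h)]
      rcases hγpm with rfl | rfl <;> rcases hδpm with rfl | rfl
      · exact h1 rfl
      · exact h2 (by norm_num)
      · exact h2 (by norm_num)
      · exact h1 rfl
    have hδc : (starRingEnd ℂ) δ = δ := by
      rw [unit_conj habsδ]
      exact inv_eq_of_mul_eq_one_left (by rw [← sq]; exact hsq)
    have hγ1ne : brkt γ 1 ≠ 0 := brkt_one_ne habsγ hγsq
    have key := len2_deg γ δ z hδc hγ1ne hδγ
    have hreal : (starRingEnd ℂ) (lineInt 1 γ 0 z) = lineInt 1 γ 0 z := by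
      rw [g_form, mul_one]; exact ratio_conj _ _ _ _
    have hr : ((lineInt 1 γ 0 z).re : ℂ) = lineInt 1 γ 0 z := Complex.conj_eq_iff_re.mp hreal
    have h1γ : (1 : ℂ) ≠ γ := fun h => hγsq (by rw [← h]; norm_num)
    have h1γ' : (1 : ℂ) ≠ -γ :=
      fun h => hγsq (by rw [show γ = -1 by linear_combination h]; norm_num)
    have hrP : (lineInt 1 γ 0 z).re ∈ projSet U := ⟨1, h1U, γ, hγ, h1γ, h1γ', z, hz, hr⟩
    refine ⟨2, ![1, -(lineInt 1 γ 0 z).re], ![z, 1], ?_, ?_, ?_⟩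
    · intro i; fin_cases i
      · exact one_mem _
      · exact neg_mem (Subring.subset_closure hrP)
    · intro i; fin_cases i
      · exact hz
      · exact one_elem hU h1U hu hu1 hu1'
    · rw [key]
      simp only [Fin.sum_univ_two, Matrix.cons_val_zero, Matrix.cons_val_one, Matrix.head_cons]
      push_cast
      rw [hr]
      ring
  · -- generic case : δ ≠ ±1
    have hδ1ne : brkt δ 1 ≠ 0 := brkt_one_ne habsδ hsq
    have key := len2_gen γ δ z hδ1ne hδγ
    have hreal : (starRingEnd ℂ) (lineInt 1 δ 0 z) = lineInt 1 δ 0 z := by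
      rw [g_form, mul_one]; exact ratio_conj _ _ _ _
    have hr : ((lineInt 1 δ 0 z).re : ℂ) = lineInt 1 δ 0 z := Complex.conj_eq_iff_re.mp hreal
    have hδne1 : δ ≠ 1 := fun h => hsq (by rw [h]; norm_num)
    have hδne1' : δ ≠ -1 := fun h => hsq (by rw [h]; norm_num)
    have h1δ : (1 : ℂ) ≠ δ := Ne.symm hδne1
    have h1δ' : (1 : ℂ) ≠ -δ := fun h => hδne1' (by linear_combination h)
    have hrP : (lineInt 1 δ 0 z).re ∈ projSet U := ⟨1, h1U, δ, hδ, h1δ, h1δ', z, hz, hr⟩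
    refine ⟨1, ![(lineInt 1 δ 0 z).re], ![lineInt γ δ 0 1], ?_, ?_, ?_⟩
    · intro i; fin_cases i; exact Subring.subset_closure hrP
    · intro i; fin_cases i; exact ⟨γ, hγ, δ, hδ, h1, h2, rfl⟩
    · rw [key]
      simp only [Fin.sum_univ_one, Matrix.cons_val_zero]
      rw [hr]

include hU h1U hu hu1 hu1' in
lemma g_comb {μ ν m : ℂ} (hμ : μ ∈ U) (hν : ν ∈ U) (h1 : μ ≠ ν) (h2 : μ ≠ -ν)
    (hm : IsZPComb U m) : IsZPComb U (lineInt μ ν 0 m) := by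
  obtain ⟨n, c, z, hc, hz, rfl⟩ := hm
  have e : lineInt μ ν 0 (∑ i, (c i : ℂ) * z i) = ∑ i, (c i : ℂ) * lineInt μ ν 0 (z i) := by
    rw [g_form, brkt_sum, Finset.sum_div, Finset.sum_mul]
    refine Finset.sum_congr rfl fun i _ => ?_
    rw [brkt_smul ν _ (z i) (Complex.conj_ofReal _), g_form μ ν (z i)]
    ring
  rw [e]
  exact comb_sum _ _ fun i _ =>
    comb_smul (hc i) (length2 hU h1U hu hu1 hu1' hμ hν h1 h2 (hz i))

include hU h1U hu hu1 hu1' in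
lemma step_subset_comb : ∀ n, ∀ x ∈ stepSet U n, IsZPComb U x := by
  intro n
  induction n with
  | zero =>
      intro x hx
      rcases hx with rfl | hx
      · exact comb_zero U
      · rw [Set.mem_singleton_iff] at hx
        subst hx
        exact comb_one hU h1U hu hu1 hu1'
  | succ n ih =>
      rintro x ⟨α, hα, β, hβ, h1, h2, p, hp, q, hq, rfl⟩
      rw [split_lineInt]
      exact comb_add
        (g_comb hU h1U hu hu1 hu1' hβ hα (Ne.symm h1)
          (fun h => h2 (by linear_combination h)) (ih p hp))
        (g_comb hU h1U hu hu1 hu1' hα hβ h1 h2 (ih q hq))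

include hU h1U hu hu1 hu1' in
lemma RU_subset_comb {x : ℂ} (hx : x ∈ RU U) : IsZPComb U x := by
  obtain ⟨n, hn⟩ := Set.mem_iUnion.1 hx
  exact step_subset_comb hU h1U hu hu1 hu1' n x hn

end ctx5

lemma comb_mul {U : Set ℂ}
    (H : ∀ z z' : ℂ, IsElem U z → IsElem U z' → IsZPComb U (z * z'))
    {a b : ℂ} (ha : IsZPComb U a) (hb : IsZPComb U b) : IsZPComb U (a * b) := by
  obtain ⟨n, c, z, hc, hz, rfl⟩ := ha
  obtain ⟨m, d, w, hd, hw, rfl⟩ := hb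
  rw [Finset.sum_mul_sum]
  refine comb_sum _ _ fun i _ => comb_sum _ _ fun j _ => ?_
  have e : (c i : ℂ) * z i * ((d j : ℂ) * w j) = (c i : ℂ) * ((d j : ℂ) * (z i * w j)) := by
    ring
  rw [e]
  exact comb_smul (hc i) (comb_smul (hd j) (H _ _ (hz i) (hw j)))

section ctx6

variable {U : Set ℂ} (hU : ∀ z ∈ U, ‖z‖ = 1) (h1U : (1 : ℂ) ∈ U)
  {u v : ℂ} (hu : u ∈ U) (hv : v ∈ U)
  (hu1 : u ≠ 1) (hu1' : u ≠ -1) (hv1 : v ≠ 1) (hv1' : v ≠ -1)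
  (huv : u ≠ v) (huv' : u ≠ -v)

include hU h1U hu hv hu1 hu1' hv1 hv1' huv huv' in
lemma comb_subset_RU {x : ℂ} (hx : IsZPComb U x) : x ∈ RU U := by
  classical
  obtain ⟨n, c, z, hc, hz, rfl⟩ := hx
  have key : ∀ s : Finset (Fin n), (∑ i ∈ s, (c i : ℂ) * z i) ∈ RU U := by
    intro s
    induction s using Finset.induction_on with
    | empty => simpa using zero_mem_RU U
    | insert _ _ hnot ih =>
        rw [Finset.sum_insert hnot]
        exact add_mem_RU hU h1U hu hv hu1 hu1' hv1 hv1' huv huv'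
          (zpsmul_mem_RU hU h1U hu hv hu1 hu1' hv1 hv1' huv huv' (hc _) _
            (elem_mem_RU (hz _))) ih
  exact key Finset.univ

end ctx6

/-- if `1 ∈ U` and `U` contains `u, v, w` with `1, u, v, w` pairwise
non-±-equal, then `R(U)` is a subring of `ℂ` iff every pairwise product of elementary
monomials is a `ℤ[P]`-linear combination of elementary monomials. -/
theorem stmt13 (U : Set ℂ) (hU : ∀ z ∈ U, ‖z‖ = 1) (h1U : (1 : ℂ) ∈ U)
    (u v w : ℂ) (hu : u ∈ U) (hv : v ∈ U) (hw : w ∈ U)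
    (hu1 : u ≠ 1) (hu1' : u ≠ -1) (hv1 : v ≠ 1) (hv1' : v ≠ -1)
    (hw1 : w ≠ 1) (hw1' : w ≠ -1)
    (huv : u ≠ v) (huv' : u ≠ -v) (huw : u ≠ w) (huw' : u ≠ -w)
    (hvw : v ≠ w) (hvw' : v ≠ -w) :
    (∃ A : Subring ℂ, (A : Set ℂ) = RU U) ↔
      ∀ z z' : ℂ, IsElem U z → IsElem U z' → IsZPComb U (z * z') := by
  constructor
  · rintro ⟨A, hA⟩ z z' hz hz'
    have hzm : z ∈ RU U := elem_mem_RU hz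
    have hz'm : z' ∈ RU U := elem_mem_RU hz'
    rw [← hA] at hzm hz'm
    have hmul : z * z' ∈ RU U := by rw [← hA]; exact mul_mem hzm hz'm
    exact RU_subset_comb hU h1U hu hu1 hu1' hmul
  · intro H
    refine ⟨{
      carrier := RU U
      zero_mem' := zero_mem_RU U
      one_mem' := one_mem_RU U
      add_mem' := fun ha hb => add_mem_RU hU h1U hu hv hu1 hu1' hv1 hv1' huv huv' ha hb
      neg_mem' := fun ha => neg_mem_RU hU h1U hu hv hu1 hu1' hv1 hv1' huv huv' ha
      mul_mem' := fun ha hb =>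
        comb_subset_RU hU h1U hu hv hu1 hu1' hv1 hv1' huv huv'
          (comb_mul H (RU_subset_comb hU h1U hu hu1 hu1' ha)
            (RU_subset_comb hU h1U hu hu1 hu1' hb)) }, rfl⟩
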